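/- Positivity of the CFL constant near the saturation level: let ψ be a saturation with saturation level α. Suppose there exist k ≥ 1 and a neighbourhood of α on which ψ is k times continuously differentiable, with ψ^{(j)}(α) = 0 for 1 ≤ j < k and (−1)^k·ψ^{(k)}(α) > 0. Then γ := inf_{s ∈ [0,α)} (α − s)/(α·ψ(s)) > 0. -/
import Mathlib


/-- A *saturation* with saturation level `α > 0`: a continuous non-increasing function
`ψ : [0,∞) → ℝ` with `ψ α = 0` and `(α − s)·ψ s > 0` for every `s ≥ 0`, `s ≠ α`. -/
def IsSaturation (ψ : ℝ → ℝ) (α : ℝ) : Prop :=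
  0 < α ∧ ContinuousOn ψ (Set.Ici 0) ∧
    (∀ s₁ s₂, 0 ≤ s₁ → s₁ ≤ s₂ → ψ s₂ ≤ ψ s₁) ∧
    ψ α = 0 ∧ ∀ s, 0 ≤ s → s ≠ α → 0 < (α - s) * ψ s

/-- The CFL constant `γ = inf_{s ∈ [0,α)} (α − s)/(α·ψ s)`. -/
noncomputable def gammaCFL (ψ : ℝ → ℝ) (α : ℝ) : ℝ :=
  sInf ((fun s => (α - s) / (α * ψ s)) '' Set.Ico 0 α)

/-- Positivity of the CFL constant near the saturation level: if `ψ` is `k` times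
continuously differentiable on a neighbourhood of `α`, with `ψ⁽ʲ⁾(α) = 0` for
`1 ≤ j < k` and `(−1)^k·ψ⁽ᵏ⁾(α) > 0`, then `γ > 0`. -/
theorem gammaCFL_pos (ψ : ℝ → ℝ) (α : ℝ) (hψ : IsSaturation ψ α)
    (k : ℕ) (hk : 1 ≤ k)
    (hsmooth : ∃ ε > (0 : ℝ), ContDiffOn ℝ k ψ (Set.Ioo (α - ε) (α + ε)))
    (hvanish : ∀ j, 1 ≤ j → j < k → iteratedDeriv j ψ α = 0)
    (hsign : 0 < (-1 : ℝ) ^ k * iteratedDeriv k ψ α) :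
    0 < gammaCFL ψ α := by
  obtain ⟨hα, hcont, hmono, hψα, hpos⟩ := hψ
  obtain ⟨ε, hε, hcd⟩ := hsmooth
  -- ψ is positive on [0, α)
  have hψpos : ∀ s ∈ Set.Ico (0:ℝ) α, 0 < ψ s := by
    intro s hs
    have h := hpos s hs.1 (ne_of_lt hs.2)
    have h1 : 0 < α - s := sub_pos.2 hs.2
    nlinarith
  -- ψ is C¹ at α, hence Lipschitz near α
  have hca : ContDiffAt ℝ 1 ψ α := by
    have h1 : ContDiffAt ℝ k ψ α :=
      hcd.contDiffAt (isOpen_Ioo.mem_nhds ⟨by linarith, by linarith⟩)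
    exact h1.of_le (by exact_mod_cast hk)
  obtain ⟨K, t, ht, hlip⟩ := hca.exists_lipschitzOnWith
  obtain ⟨r, hr, hball⟩ := Metric.mem_nhds_iff.mp ht
  set δ : ℝ := r / 2 with hδdef
  have hδ : 0 < δ := by positivity
  set C : ℝ := (K : ℝ) + 1 with hC
  have hCpos : 0 < C := by positivity
  have hlin : ∀ s, α - δ ≤ s → s ≤ α → ψ s ≤ C * (α - s) := by
    intro s h1 h2
    have hst : s ∈ t := hball (by
      rw [Metric.mem_ball, Real.dist_eq, abs_sub_comm,
        abs_of_nonneg (by linarith)]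
      linarith)
    have hαt : α ∈ t := hball (Metric.mem_ball_self hr)
    have hd := hlip.dist_le_mul s hst α hαt
    rw [Real.dist_eq, Real.dist_eq, hψα, sub_zero] at hd
    have h3 : |s - α| = α - s := by
      rw [abs_sub_comm]; exact abs_of_nonneg (by linarith)
    rw [h3] at hd
    have h4 : ψ s ≤ |ψ s| := le_abs_self _
    have h5 : (0:ℝ) ≤ K := K.coe_nonneg
    nlinarith
  -- the away-from-α part: minimum on a compact set
  set a : ℝ := max 0 (α - δ) with ha
  have haα : a < α := by
    apply max_lt hα; linarith
  have ha0 : (0:ℝ) ≤ a := le_max_left _ _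
  have hsub : Set.Icc (0:ℝ) a ⊆ Set.Ico 0 α := fun s hs => ⟨hs.1, lt_of_le_of_lt hs.2 haα⟩
  have hgcont : ContinuousOn (fun s => (α - s) / (α * ψ s)) (Set.Icc 0 a) := by
    apply ContinuousOn.div
    · exact continuousOn_const.sub continuousOn_id
    · exact continuousOn_const.mul (hcont.mono (fun s hs => hs.1))
    · intro s hs
      have := hψpos s (hsub hs)
      positivity
  obtain ⟨m0, hm0, hmin⟩ := isCompact_Icc.exists_isMinOn ⟨0, le_refl 0, ha0⟩ hgcont
  have hb2 : 0 < (α - m0) / (α * ψ m0) := by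
    have h1 := hψpos m0 (hsub hm0)
    have h2 : 0 < α - m0 := sub_pos.2 (lt_of_le_of_lt hm0.2 haα)
    positivity
  set b : ℝ := min ((α - m0) / (α * ψ m0)) (1 / (α * C)) with hb
  have hbpos : 0 < b := lt_min hb2 (by positivity)
  -- b is a lower bound on the image
  have hlb : ∀ y ∈ (fun s => (α - s) / (α * ψ s)) '' Set.Ico 0 α, b ≤ y := by
    rintro y ⟨s, hs, rfl⟩
    rcases le_total s a with hsa | has
    · exact le_trans (min_le_left _ _) (hmin ⟨hs.1, hsa⟩)
    · have h1 : α - δ ≤ s := le_trans (le_max_right _ _) has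
      have h2 : s ≤ α := le_of_lt hs.2
      have h3 := hlin s h1 h2
      have h4 := hψpos s hs
      have h5 : 0 < α - s := sub_pos.2 hs.2
      refine le_trans (min_le_right _ _) ?_
      rw [div_le_div_iff₀ (by positivity) (by positivity)]
      nlinarith
  have hne : ((fun s => (α - s) / (α * ψ s)) '' Set.Ico 0 α).Nonempty :=
    ⟨_, Set.mem_image_of_mem _ ⟨le_refl 0, hα⟩⟩
  exact lt_of_lt_of_le hbpos (le_csInf hne hlb)
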